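/- Let U, V, ξ, η be real random variables on a common probability space such that U, V, U₁ := U + ξ and V₁ := V + η all have continuous distribution functions. Set ε₁ := P(ξ ≠ 0) and ε₂ := P(η ≠ 0). Then |ρ_S(U₁, V₁) − ρ_S(U, V)| ≤ 18(ε₁ + ε₂) + 12 ε₁ ε₂. -/

import Mathlib

set_option linter.unusedSectionVars false

open MeasureTheory ProbabilityTheory Filter Set

/-- The distribution function of a real random variable `X` on `(Ω, μ)`. -/
noncomputable def distFun {Ω : Type*} [MeasurableSpace Ω] (μ : Measure Ω)
    (X : Ω → ℝ) : ℝ → ℝ := fun x => (μ {ω | X ω ≤ x}).toReal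

/-- Spearman's rank correlation `ρ_S(U,V) = 12 (E[F_U(U) F_V(V)] - 1/4)` for random
variables with continuous distribution functions. -/
noncomputable def spearmanRho {Ω : Type*} [MeasurableSpace Ω] (μ : Measure Ω)
    (U V : Ω → ℝ) : ℝ :=
  12 * ((∫ ω, distFun μ U (U ω) * distFun μ V (V ω) ∂μ) - 1 / 4)

section Aux

variable {Ω : Type*} [MeasurableSpace Ω] {μ : Measure Ω} [IsProbabilityMeasure μ]

lemma distFun_nonneg (X : Ω → ℝ) (x : ℝ) : 0 ≤ distFun μ X x :=
  ENNReal.toReal_nonneg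

lemma distFun_le_one (X : Ω → ℝ) (x : ℝ) : distFun μ X x ≤ 1 := by
  have h := measure_mono (subset_univ {ω | X ω ≤ x}) (μ := μ)
  rw [measure_univ] at h
  simpa [distFun] using ENNReal.toReal_mono ENNReal.one_ne_top h

/-- Sup-distance bound between the cdf of `X` and `X + ζ`. -/
lemma abs_distFun_add_sub_le (X ζ : Ω → ℝ) (x : ℝ) :
    |distFun μ (X + ζ) x - distFun μ X x| ≤ (μ {ω | ζ ω ≠ 0}).toReal := by
  set A := {ω | ζ ω ≠ 0}
  have key : ∀ s t : Set Ω, s ⊆ t ∪ A → (μ s).toReal ≤ (μ t).toReal + (μ A).toReal := by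
    intro s t hst
    have h1 : μ s ≤ μ t + μ A := (measure_mono hst).trans (measure_union_le _ _)
    have h2 := ENNReal.toReal_mono (by finiteness) h1
    rwa [ENNReal.toReal_add (measure_ne_top _ _) (measure_ne_top _ _)] at h2
  have hsub1 : {ω | (X + ζ) ω ≤ x} ⊆ {ω | X ω ≤ x} ∪ A := by
    intro ω hω
    by_cases h : ζ ω = 0
    · left; simpa [Pi.add_apply, h] using hω
    · right; exact h
  have hsub2 : {ω | X ω ≤ x} ⊆ {ω | (X + ζ) ω ≤ x} ∪ A := by
    intro ω hω
    by_cases h : ζ ω = 0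
    · left; simpa [Pi.add_apply, h] using hω
    · right; exact h
  rw [abs_sub_le_iff]
  constructor
  · have := key _ _ hsub1
    simp only [distFun]
    linarith
  · have := key _ _ hsub2
    simp only [distFun]
    linarith

/-- Probability integral transform mean: if the cdf of `X` is continuous then
`E[F_X(X)] = 1/2`. -/
lemma integral_distFun_comp {X : Ω → ℝ} (hX : Measurable X)
    (hc : Continuous (distFun μ X)) :
    ∫ ω, distFun μ X (X ω) ∂μ = 1 / 2 := by
  set ν := μ.map X with hνdef
  haveI hprob : IsProbabilityMeasure ν := Measure.isProbabilityMeasure_map hX.aemeasurable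
  have hIic : ∀ x, ν (Iic x) = μ {ω | X ω ≤ x} := by
    intro x
    rw [hνdef, Measure.map_apply hX measurableSet_Iic]
    rfl
  have hFν : ∀ x, distFun μ X x = (ν (Iic x)).toReal := by
    intro x; rw [hIic]; rfl
  have hofReal : ∀ x, ENNReal.ofReal (distFun μ X x) = ν (Iic x) := by
    intro x; rw [hFν, ENNReal.ofReal_toReal (measure_ne_top _ _)]
  -- ν has no atoms
  have hatom : ∀ x : ℝ, ν {x} = 0 := by
    intro x
    have hle : ∀ n : ℕ, (ν {x}).toReal ≤
        distFun μ X x - distFun μ X (x - ((n : ℝ) + 1)⁻¹) := by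
      intro n
      have hpos : (0 : ℝ) < ((n : ℝ) + 1)⁻¹ := by positivity
      have hab : x - ((n : ℝ) + 1)⁻¹ ≤ x := by linarith
      have hsplit : ν (Iic (x - ((n : ℝ) + 1)⁻¹)) + ν (Ioc (x - ((n : ℝ) + 1)⁻¹) x)
          = ν (Iic x) := by
        rw [← measure_union (Iic_disjoint_Ioc le_rfl) measurableSet_Ioc,
          Iic_union_Ioc_eq_Iic hab]
      have h2 : (ν (Ioc (x - ((n : ℝ) + 1)⁻¹) x)).toReal
          = distFun μ X x - distFun μ X (x - ((n : ℝ) + 1)⁻¹) := by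
        have := congrArg ENNReal.toReal hsplit
        rw [ENNReal.toReal_add (measure_ne_top _ _) (measure_ne_top _ _)] at this
        rw [hFν, hFν]
        linarith
      have hmono : (ν {x}).toReal ≤ (ν (Ioc (x - ((n : ℝ) + 1)⁻¹) x)).toReal := by
        apply ENNReal.toReal_mono (measure_ne_top _ _)
        apply measure_mono
        intro y hy
        rcases hy with rfl
        exact ⟨by linarith, le_rfl⟩
      rw [h2] at hmono
      exact hmono
    have htendarg : Tendsto (fun n : ℕ => x - ((n : ℝ) + 1)⁻¹) atTop (nhds x) := by
      have h0 : Tendsto (fun n : ℕ => ((n : ℝ) + 1)⁻¹) atTop (nhds 0) := by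
        simpa [one_div] using (tendsto_one_div_add_atTop_nhds_zero_nat :
          Tendsto (fun n : ℕ => 1 / ((n : ℝ) + 1)) atTop (nhds 0))
      simpa using tendsto_const_nhds.sub h0
    have htend : Tendsto (fun n : ℕ => distFun μ X x - distFun μ X (x - ((n : ℝ) + 1)⁻¹))
        atTop (nhds (distFun μ X x - distFun μ X x)) :=
      Tendsto.sub tendsto_const_nhds ((hc.tendsto x).comp htendarg)
    rw [sub_self] at htend
    have h0 : (ν {x}).toReal ≤ 0 := ge_of_tendsto htend (Eventually.of_forall hle)
    have h00 : (ν {x}).toReal = 0 := le_antisymm h0 ENNReal.toReal_nonneg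
    exact (ENNReal.toReal_eq_zero_iff _).mp h00 |>.resolve_right (measure_ne_top _ _)
  -- the lower triangle has measure 1/2
  have hS : MeasurableSet {p : ℝ × ℝ | p.2 ≤ p.1} := measurableSet_le measurable_snd measurable_fst
  have hS' : MeasurableSet {p : ℝ × ℝ | p.1 ≤ p.2} := measurableSet_le measurable_fst measurable_snd
  have hswap : (ν.prod ν) {p : ℝ × ℝ | p.1 ≤ p.2} = (ν.prod ν) {p : ℝ × ℝ | p.2 ≤ p.1} := by
    conv_lhs => rw [← Measure.prod_swap]
    rw [Measure.map_apply measurable_swap hS']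
    rfl
  have hinter : (ν.prod ν) ({p : ℝ × ℝ | p.2 ≤ p.1} ∩ {p : ℝ × ℝ | p.1 ≤ p.2}) = 0 := by
    rw [Measure.prod_apply (hS.inter hS')]
    have hpre : ∀ x : ℝ, Prod.mk x ⁻¹' ({p : ℝ × ℝ | p.2 ≤ p.1} ∩ {p : ℝ × ℝ | p.1 ≤ p.2})
        = {x} := by
      intro x
      ext y
      simp [le_antisymm_iff, and_comm, eq_comm]
    simp [hpre, hatom]
  have hunion : {p : ℝ × ℝ | p.2 ≤ p.1} ∪ {p : ℝ × ℝ | p.1 ≤ p.2} = univ := by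
    ext p; simpa using le_total p.2 p.1
  have hadd := measure_union_add_inter (μ := ν.prod ν) {p : ℝ × ℝ | p.2 ≤ p.1} hS'
  rw [hunion, hinter, hswap, measure_univ] at hadd
  have h2 : (2 : ENNReal) * (ν.prod ν) {p : ℝ × ℝ | p.2 ≤ p.1} = 1 := by
    rw [two_mul, ← hadd, add_zero]
  have hkey : (ν.prod ν) {p : ℝ × ℝ | p.2 ≤ p.1} = 1 / 2 :=
    (ENNReal.eq_div_iff two_ne_zero ENNReal.ofNat_ne_top).mpr h2
  have hlower : (ν.prod ν) {p : ℝ × ℝ | p.2 ≤ p.1} = ∫⁻ x, ν (Iic x) ∂ν := by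
    rw [Measure.prod_apply hS]
    rfl
  -- conclude
  have hint : ∫ ω, distFun μ X (X ω) ∂μ = ∫ x, distFun μ X x ∂ν :=
    (integral_map hX.aemeasurable hc.aestronglyMeasurable).symm
  rw [hint, integral_eq_lintegral_of_nonneg_ae
      (Eventually.of_forall fun x => distFun_nonneg X x) hc.aestronglyMeasurable]
  have hfin : ∫⁻ x, ENNReal.ofReal (distFun μ X x) ∂ν = 1 / 2 := by
    calc ∫⁻ x, ENNReal.ofReal (distFun μ X x) ∂ν = ∫⁻ x, ν (Iic x) ∂ν := by
          simp_rw [hofReal]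
      _ = 1 / 2 := by rw [← hlower, hkey]
  rw [hfin]
  simp [ENNReal.toReal_div]

lemma integrable_of_abs_le {f : Ω → ℝ} (hm : AEStronglyMeasurable f μ) (C : ℝ)
    (h : ∀ ω, |f ω| ≤ C) : Integrable f μ :=
  ⟨hm, HasFiniteIntegral.of_bounded (C := C)
    (Eventually.of_forall fun ω => by simpa [Real.norm_eq_abs] using h ω)⟩

end Aux

/-- **Theorem 2 of the paper.** If `U`, `V`, `U₁ = U + ξ` and `V₁ = V + η`
are all continuously distributed, then with `ε₁ = P(ξ ≠ 0)`, `ε₂ = P(η ≠ 0)`,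
`|ρ_S(U₁,V₁) - ρ_S(U,V)| ≤ 18(ε₁ + ε₂) + 12 ε₁ ε₂`. -/
theorem spearman_perturbation_bound
    {Ω : Type*} [MeasurableSpace Ω] (μ : Measure Ω) [IsProbabilityMeasure μ]
    (U V ξ η : Ω → ℝ)
    (hU : Measurable U) (hV : Measurable V) (hξ : Measurable ξ) (hη : Measurable η)
    (hUc : Continuous (distFun μ U)) (hVc : Continuous (distFun μ V))
    (hU₁c : Continuous (distFun μ (U + ξ))) (hV₁c : Continuous (distFun μ (V + η))) :
    |spearmanRho μ (U + ξ) (V + η) - spearmanRho μ U V| ≤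
      18 * ((μ {ω | ξ ω ≠ 0}).toReal + (μ {ω | η ω ≠ 0}).toReal) +
        12 * ((μ {ω | ξ ω ≠ 0}).toReal * (μ {ω | η ω ≠ 0}).toReal) := by
  set A := {ω | ξ ω ≠ 0} with hA
  set B := {ω | η ω ≠ 0} with hB
  have hAm : MeasurableSet A := (hξ (measurableSet_singleton 0)).compl
  have hBm : MeasurableSet B := (hη (measurableSet_singleton 0)).compl
  set e1 := (μ A).toReal with he1
  set e2 := (μ B).toReal with he2
  have he1n : 0 ≤ e1 := ENNReal.toReal_nonneg
  have he2n : 0 ≤ e2 := ENNReal.toReal_nonneg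
  have hU1 : Measurable (U + ξ) := hU.add hξ
  have hV1 : Measurable (V + η) := hV.add hη
  -- the four composed random variables
  set f : Ω → ℝ := fun ω => distFun μ U (U ω) with hfdef
  set g : Ω → ℝ := fun ω => distFun μ V (V ω) with hgdef
  set f1 : Ω → ℝ := fun ω => distFun μ (U + ξ) ((U + ξ) ω) with hf1def
  set g1 : Ω → ℝ := fun ω => distFun μ (V + η) ((V + η) ω) with hg1def
  have hfm : AEStronglyMeasurable f μ := (hUc.measurable.comp hU).aestronglyMeasurable
  have hgm : AEStronglyMeasurable g μ := (hVc.measurable.comp hV).aestronglyMeasurable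
  have hf1m : AEStronglyMeasurable f1 μ := (hU₁c.measurable.comp hU1).aestronglyMeasurable
  have hg1m : AEStronglyMeasurable g1 μ := (hV₁c.measurable.comp hV1).aestronglyMeasurable
  have hf01 : ∀ ω, 0 ≤ f ω ∧ f ω ≤ 1 := fun ω => ⟨distFun_nonneg _ _, distFun_le_one _ _⟩
  have hg01 : ∀ ω, 0 ≤ g ω ∧ g ω ≤ 1 := fun ω => ⟨distFun_nonneg _ _, distFun_le_one _ _⟩
  have hf101 : ∀ ω, 0 ≤ f1 ω ∧ f1 ω ≤ 1 := fun ω => ⟨distFun_nonneg _ _, distFun_le_one _ _⟩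
  have hg101 : ∀ ω, 0 ≤ g1 ω ∧ g1 ω ≤ 1 := fun ω => ⟨distFun_nonneg _ _, distFun_le_one _ _⟩
  -- means
  have hmf : ∫ ω, f ω ∂μ = 1 / 2 := integral_distFun_comp hU hUc
  have hmg : ∫ ω, g ω ∂μ = 1 / 2 := integral_distFun_comp hV hVc
  have hmf1 : ∫ ω, f1 ω ∂μ = 1 / 2 := integral_distFun_comp hU1 hU₁c
  have hmg1 : ∫ ω, g1 ω ∂μ = 1 / 2 := integral_distFun_comp hV1 hV₁c
  -- pointwise perturbation bounds
  have hfbd : ∀ ω, |f1 ω - f ω| ≤ A.indicator (fun _ => (1 : ℝ)) ω + e1 := by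
    intro ω
    by_cases h : ξ ω = 0
    · have hωA : ω ∉ A := by simp [hA, h]
      rw [indicator_of_notMem hωA]
      have hxeq : (U + ξ) ω = U ω := by simp [Pi.add_apply, h]
      have hb : |f1 ω - f ω| ≤ e1 := by
        rw [hf1def, hfdef]
        simp only [hxeq]
        exact abs_distFun_add_sub_le U ξ (U ω)
      linarith
    · have hωA : ω ∈ A := h
      rw [indicator_of_mem hωA]
      have h1 := (hf101 ω).1; have h2 := (hf101 ω).2
      have h3 := (hf01 ω).1; have h4 := (hf01 ω).2
      rw [abs_le]
      constructor <;> nlinarith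
  have hgbd : ∀ ω, |g1 ω - g ω| ≤ B.indicator (fun _ => (1 : ℝ)) ω + e2 := by
    intro ω
    by_cases h : η ω = 0
    · have hωB : ω ∉ B := by simp [hB, h]
      rw [indicator_of_notMem hωB]
      have hxeq : (V + η) ω = V ω := by simp [Pi.add_apply, h]
      have hb : |g1 ω - g ω| ≤ e2 := by
        rw [hg1def, hgdef]
        simp only [hxeq]
        exact abs_distFun_add_sub_le V η (V ω)
      linarith
    · have hωB : ω ∈ B := h
      rw [indicator_of_mem hωB]
      have h1 := (hg101 ω).1; have h2 := (hg101 ω).2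
      have h3 := (hg01 ω).1; have h4 := (hg01 ω).2
      rw [abs_le]
      constructor <;> nlinarith
  -- integrability
  have hif : Integrable f μ := integrable_of_abs_le hfm 1
    (fun ω => abs_le.mpr ⟨by linarith [(hf01 ω).1], (hf01 ω).2⟩)
  have hig : Integrable g μ := integrable_of_abs_le hgm 1
    (fun ω => abs_le.mpr ⟨by linarith [(hg01 ω).1], (hg01 ω).2⟩)
  have hif1 : Integrable f1 μ := integrable_of_abs_le hf1m 1
    (fun ω => abs_le.mpr ⟨by linarith [(hf101 ω).1], (hf101 ω).2⟩)
  have hig1 : Integrable g1 μ := integrable_of_abs_le hg1m 1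
    (fun ω => abs_le.mpr ⟨by linarith [(hg101 ω).1], (hg101 ω).2⟩)
  have hifg : Integrable (fun ω => f ω * g ω) μ := by
    refine integrable_of_abs_le (f := fun ω => f ω * g ω) (hfm.mul hgm) 1 ?_
    intro ω
    show |f ω * g ω| ≤ 1
    rw [abs_le]
    refine ⟨by linarith [mul_nonneg (hf01 ω).1 (hg01 ω).1], ?_⟩
    exact mul_le_one₀ (hf01 ω).2 (hg01 ω).1 (hg01 ω).2
  have hifg1 : Integrable (fun ω => f1 ω * g1 ω) μ := by
    refine integrable_of_abs_le (f := fun ω => f1 ω * g1 ω) (hf1m.mul hg1m) 1 ?_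
    intro ω
    show |f1 ω * g1 ω| ≤ 1
    rw [abs_le]
    refine ⟨by linarith [mul_nonneg (hf101 ω).1 (hg101 ω).1], ?_⟩
    exact mul_le_one₀ (hf101 ω).2 (hg101 ω).1 (hg101 ω).2
  -- the centered difference
  set hfun : Ω → ℝ := fun ω => (f1 ω - 1/2) * (g1 ω - 1/2) - (f ω - 1/2) * (g ω - 1/2)
    with hhfun
  have habs4 : ∀ a b : ℝ, 0 ≤ a → a ≤ 1 → 0 ≤ b → b ≤ 1 →
      |(a - 1/2) * (b - 1/2)| ≤ 1/4 := by
    intro a b ha ha' hb hb'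
    rw [abs_mul]
    calc |a - 1/2| * |b - 1/2| ≤ (1/2) * (1/2) :=
          mul_le_mul (abs_le.mpr ⟨by linarith, by linarith⟩)
            (abs_le.mpr ⟨by linarith, by linarith⟩) (abs_nonneg _) (by norm_num)
      _ = 1/4 := by norm_num
  have hih : Integrable hfun μ := by
    apply integrable_of_abs_le
      (((hf1m.sub aestronglyMeasurable_const).mul (hg1m.sub aestronglyMeasurable_const)).sub
        ((hfm.sub aestronglyMeasurable_const).mul (hgm.sub aestronglyMeasurable_const))) 1
    intro ω
    have h1 := habs4 _ _ (hf101 ω).1 (hf101 ω).2 (hg101 ω).1 (hg101 ω).2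
    have h2 := habs4 _ _ (hf01 ω).1 (hf01 ω).2 (hg01 ω).1 (hg01 ω).2
    calc |hfun ω| ≤ |(f1 ω - 1/2) * (g1 ω - 1/2)| + |(f ω - 1/2) * (g ω - 1/2)| :=
          abs_sub _ _
      _ ≤ 1 := by linarith
  -- integral of hfun equals the integral of the raw difference
  have hsplit : ∀ ω, f1 ω * g1 ω - f ω * g ω
      = hfun ω + (1/2) * (f1 ω - f ω) + (1/2) * (g1 ω - g ω) := by
    intro ω; simp only [hhfun]; ring
  have hint_eq : ∫ ω, (f1 ω * g1 ω - f ω * g ω) ∂μ = ∫ ω, hfun ω ∂μ := by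
    have h1 : Integrable (fun ω => (1/2 : ℝ) * (f1 ω - f ω)) μ :=
      ((hif1.sub hif).const_mul _)
    have h2 : Integrable (fun ω => (1/2 : ℝ) * (g1 ω - g ω)) μ :=
      ((hig1.sub hig).const_mul _)
    calc ∫ ω, (f1 ω * g1 ω - f ω * g ω) ∂μ
        = ∫ ω, (hfun ω + (1/2) * (f1 ω - f ω) + (1/2) * (g1 ω - g ω)) ∂μ :=
          integral_congr_ae (Eventually.of_forall hsplit)
      _ = (∫ ω, hfun ω ∂μ) + (∫ ω, (1/2 : ℝ) * (f1 ω - f ω) ∂μ)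
          + (∫ ω, (1/2 : ℝ) * (g1 ω - g ω) ∂μ) := by
          have hadd1 : Integrable (fun ω => hfun ω + (1/2 : ℝ) * (f1 ω - f ω)) μ :=
            hih.add h1
          rw [integral_add hadd1 h2, integral_add hih h1]
      _ = ∫ ω, hfun ω ∂μ := by
          rw [integral_const_mul, integral_const_mul, integral_sub hif1 hif,
            integral_sub hig1 hig, hmf, hmg, hmf1, hmg1]
          ring
  -- bound the integral of |hfun|
  have hiA : Integrable (fun ω => A.indicator (1 : Ω → ℝ) ω + e1) μ :=
    ((integrable_const (1:ℝ)).indicator hAm).add (integrable_const e1)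
  have hiB : Integrable (fun ω => B.indicator (1 : Ω → ℝ) ω + e2) μ :=
    ((integrable_const (1:ℝ)).indicator hBm).add (integrable_const e2)
  have hbound_int : Integrable (fun ω =>
      (1/2 : ℝ) * (A.indicator (1 : Ω → ℝ) ω + e1)
      + (1/2 : ℝ) * (B.indicator (1 : Ω → ℝ) ω + e2)) μ :=
    (hiA.const_mul _).add (hiB.const_mul _)
  have habs : ∀ ω, |hfun ω| ≤
      (1/2 : ℝ) * (A.indicator (1 : Ω → ℝ) ω + e1)
      + (1/2 : ℝ) * (B.indicator (1 : Ω → ℝ) ω + e2) := by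
    intro ω
    have key : hfun ω = (f1 ω - f ω) * (g1 ω - 1/2) + (f ω - 1/2) * (g1 ω - g ω) := by
      simp only [hhfun]; ring
    have h2 := (hg101 ω); have h3 := (hf01 ω)
    have hb1 : |g1 ω - 1/2| ≤ 1/2 := abs_le.mpr ⟨by linarith [h2.1], by linarith [h2.2]⟩
    have hb2 : |f ω - 1/2| ≤ 1/2 := abs_le.mpr ⟨by linarith [h3.1], by linarith [h3.2]⟩
    have hind1 : (0:ℝ) ≤ A.indicator (1 : Ω → ℝ) ω := by
      by_cases hω : ω ∈ A <;> simp [hω]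
    have hind2 : (0:ℝ) ≤ B.indicator (1 : Ω → ℝ) ω := by
      by_cases hω : ω ∈ B <;> simp [hω]
    calc |hfun ω| ≤ |(f1 ω - f ω) * (g1 ω - 1/2)| + |(f ω - 1/2) * (g1 ω - g ω)| := by
          rw [key]; exact abs_add_le _ _
      _ = |f1 ω - f ω| * |g1 ω - 1/2| + |f ω - 1/2| * |g1 ω - g ω| := by
          rw [abs_mul, abs_mul]
      _ ≤ (A.indicator (1 : Ω → ℝ) ω + e1) * (1/2)
          + (1/2) * (B.indicator (1 : Ω → ℝ) ω + e2) := by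
          apply add_le_add
          · exact mul_le_mul (hfbd ω) hb1 (abs_nonneg _) (by positivity)
          · exact mul_le_mul hb2 (hgbd ω) (abs_nonneg _) (by norm_num)
      _ = (1/2 : ℝ) * (A.indicator (1 : Ω → ℝ) ω + e1)
          + (1/2 : ℝ) * (B.indicator (1 : Ω → ℝ) ω + e2) := by ring
  have hintbound : ∫ ω, ((1/2 : ℝ) * (A.indicator (1 : Ω → ℝ) ω + e1)
      + (1/2 : ℝ) * (B.indicator (1 : Ω → ℝ) ω + e2)) ∂μ = e1 + e2 := by
    have hiA' : Integrable (fun ω => (1/2:ℝ) * (A.indicator (1 : Ω → ℝ) ω + e1)) μ :=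
      hiA.const_mul _
    have hiB' : Integrable (fun ω => (1/2:ℝ) * (B.indicator (1 : Ω → ℝ) ω + e2)) μ :=
      hiB.const_mul _
    have hiAind : Integrable (fun ω => A.indicator (1 : Ω → ℝ) ω) μ :=
      (integrable_const (1:ℝ)).indicator hAm
    have hiBind : Integrable (fun ω => B.indicator (1 : Ω → ℝ) ω) μ :=
      (integrable_const (1:ℝ)).indicator hBm
    rw [integral_add hiA' hiB', integral_const_mul, integral_const_mul,
      integral_add hiAind (integrable_const e1),
      integral_add hiBind (integrable_const e2),
      integral_indicator_one hAm, integral_indicator_one hBm, integral_const,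
      integral_const]
    simp [he1, he2, measureReal_def]
    ring
  have hmain : |∫ ω, hfun ω ∂μ| ≤ e1 + e2 := by
    have h1 : |∫ ω, hfun ω ∂μ| ≤ ∫ ω, |hfun ω| ∂μ := by
      simpa [Real.norm_eq_abs] using norm_integral_le_integral_norm (μ := μ) hfun
    have h2 : ∫ ω, |hfun ω| ∂μ ≤ ∫ ω, ((1/2 : ℝ) * (A.indicator (1 : Ω → ℝ) ω + e1)
        + (1/2 : ℝ) * (B.indicator (1 : Ω → ℝ) ω + e2)) ∂μ :=
      integral_mono_of_nonneg (Eventually.of_forall fun ω => abs_nonneg _) hbound_int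
        (Eventually.of_forall habs)
    rw [hintbound] at h2
    linarith
  -- put everything together
  have hI1 : ∫ ω, distFun μ (U + ξ) ((U + ξ) ω) * distFun μ (V + η) ((V + η) ω) ∂μ
      = ∫ ω, f1 ω * g1 ω ∂μ := rfl
  have hI2 : ∫ ω, distFun μ U (U ω) * distFun μ V (V ω) ∂μ
      = ∫ ω, f ω * g ω ∂μ := rfl
  have hrho : spearmanRho μ (U + ξ) (V + η) - spearmanRho μ U V
      = 12 * ∫ ω, hfun ω ∂μ := by
    simp only [spearmanRho]
    rw [hI1, hI2, ← hint_eq, integral_sub hifg1 hifg]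
    ring
  rw [hrho, abs_mul]
  have h12 : |(12 : ℝ)| = 12 := by norm_num
  rw [h12]
  nlinarith [hmain, he1n, he2n, mul_nonneg he1n he2n, abs_nonneg (∫ ω, hfun ω ∂μ)]
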